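/- For every integer c ≥ 3, set N := ⌊(c−1)/2⌋, m := ⌊(c+2)/4⌋, and S := Σ_{g=1}^{N} (t(c,g) + t_p(c,g)). Then 2·Σ_{g=1}^{m} (t(c,g) + t_p(c,g)) ≥ S and 2·Σ_{g=m}^{N} (t(c,g) + t_p(c,g)) ≥ S. (That is, the median of the genus distribution of 2-bridge knots with crossing number c is ⌊(c+2)/4⌋.) -/
import Mathlib


/-- `tKnot c g` is t(c,g), the number of words in the partially double counted set T(c)
representing 2-bridge knots of crossing number `c` and genus `g`, given by the explicit
formula t(c,g) = (-1)^(c-1) * Σ_{n=0}^{c-2g-1} (-1)^n * binom(n+2g-1, n), the sum being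
empty when c - 2g - 1 < 0, and t(c,0) = 0. -/
def tKnot (c g : ℕ) : ℤ :=
  if g = 0 then 0
  else (-1 : ℤ) ^ (c - 1) *
    ∑ n ∈ Finset.range (c - 2 * g), (-1 : ℤ) ^ n * (Nat.choose (n + 2 * g - 1) n)

/-- `tpKnot c g` is t_p(c,g), the number of words of palindromic type representing
2-bridge knots of crossing number `c` and genus `g`, given by the explicit formula
t_p(c,g) = (-1)^(c'-g-1) * Σ_{n=0}^{c'-g-1} (-1)^n * binom(n+g-1, n) with
c' = ⌊(c+1)/2⌋, the sum being empty when c' - g - 1 < 0, and t_p(c,0) = 0. -/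
def tpKnot (c g : ℕ) : ℤ :=
  if g = 0 then 0
  else (-1 : ℤ) ^ ((c + 1) / 2 - g - 1) *
    ∑ n ∈ Finset.range ((c + 1) / 2 - g), (-1 : ℤ) ^ n * (Nat.choose (n + g - 1) n)

open Finset

/-- Coefficients of 1/((1+x)(1-2x)(1-x)^k). -/
def Hf : ℕ → ℕ → ℤ
  | 0, 0 => 1
  | 0, 1 => 1
  | 0, (n+2) => Hf 0 (n+1) + 2 * Hf 0 n
  | (_+1), 0 => 1
  | (k+1), (n+1) => Hf k (n+1) + Hf (k+1) n

/-- Coefficients of 1/((1+x)(1-x)^k). -/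
def Qf : ℕ → ℕ → ℤ
  | _, 0 => 1
  | 0, (n+1) => - Qf 0 n
  | (k+1), (n+1) => Qf k (n+1) + Qf (k+1) n

lemma Hf_zero (k : ℕ) : Hf k 0 = 1 := by cases k <;> simp [Hf]

lemma Hf_rec0 (n : ℕ) : Hf 0 (n+2) = Hf 0 (n+1) + 2 * Hf 0 n := by rw [Hf]

lemma Hf_rec (k n : ℕ) : Hf (k+1) (n+1) = Hf k (n+1) + Hf (k+1) n := by rw [Hf]

lemma Qf_zero (k : ℕ) : Qf k 0 = 1 := by cases k <;> simp [Qf]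

lemma Qf_rec0 (n : ℕ) : Qf 0 (n+1) = - Qf 0 n := by rw [Qf]

lemma Qf_rec (k n : ℕ) : Qf (k+1) (n+1) = Qf k (n+1) + Qf (k+1) n := by rw [Qf]

lemma Hf_one (k : ℕ) : Hf k 1 = k + 1 := by
  induction k with
  | zero => simp [Hf]
  | succ k ih => rw [Hf_rec, ih, Hf_zero]; push_cast; ring

lemma Qf_def (k : ℕ) : ∀ n, Qf k (n+1) = Hf k (n+1) - 2 * Hf k n := by
  induction k with
  | zero =>
    intro n
    induction n with
    | zero => simp [Hf, Qf]
    | succ n ih => rw [Qf_rec0, ih, Hf_rec0]; ring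
  | succ k ihk =>
    intro n
    induction n with
    | zero =>
      rw [Qf_rec, ihk 0, Qf_zero, Hf_one, Hf_rec, Hf_one, Hf_zero, Hf_zero]
      push_cast; ring
    | succ n ihn =>
      rw [Qf_rec, ihk (n+1), ihn, Hf_rec k (n+1), Hf_rec k n]
      ring

lemma Qf_tele1 (k n : ℕ) : Qf (k+1) (n+1) = Hf k (n+1) - Hf (k+1) n := by
  rw [Qf_def, Hf_rec]; ring

lemma Qf_tele2 (k n : ℕ) : Qf (k+2) (n+2) = Hf k (n+2) - Hf (k+2) n := by
  rw [Qf_tele1, Hf_rec k (n+1), Hf_rec (k+1) n]; ring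

lemma Qf_add (k : ℕ) : ∀ n, Qf k (n+1) + Qf k n = ((n+k).choose (n+1) : ℤ) := by
  induction k with
  | zero =>
    intro n
    rw [Qf_rec0, Nat.choose_eq_zero_of_lt (by omega)]
    push_cast; ring
  | succ k ihk =>
    intro n
    induction n with
    | zero =>
      have h := ihk 0
      rw [Qf_zero] at h
      rw [Qf_rec, Qf_zero]
      simp only [Nat.zero_add, Nat.choose_one_right] at h ⊢
      push_cast at h ⊢
      linarith
    | succ n ihn =>
      have hg : Qf (k+1) (n+2) = Qf k (n+2) + Qf (k+1) (n+1) := Qf_rec k (n+1)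
      have h1 := ihk (n+1)
      have hp : ((n+1)+(k+1)).choose (n+2) = ((n+1)+k).choose (n+1) + ((n+1)+k).choose (n+2) := by
        rw [show (n+1)+(k+1) = ((n+1)+k)+1 by ring]
        exact Nat.choose_succ_succ _ _
      rw [hp]
      have e1 : (n+1+k) = (n+k+1) := by ring
      have e2 : (n+(k+1)) = (n+k+1) := by ring
      rw [e1] at h1 ⊢
      rw [e2] at ihn
      rw [show n+1+1 = n+2 from rfl] at h1 ⊢
      rw [hg]
      have hg2 : Qf (k+1) (n+1) = Qf k (n+1) + Qf (k+1) n := Qf_rec k n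
      push_cast at h1 ihn ⊢
      linarith

lemma Qf_one_bounds : ∀ n, 0 ≤ Qf 1 n ∧ Qf 1 n ≤ 1 := by
  intro n
  induction n with
  | zero => rw [Qf_zero]; omega
  | succ n ih =>
    have h := Qf_add 1 n
    rw [Nat.choose_self] at h
    push_cast at h
    omega

lemma Qf_nonneg (k : ℕ) : ∀ n, 0 ≤ Qf (k+1) n := by
  induction k with
  | zero => intro n; exact (Qf_one_bounds n).1
  | succ k ih =>
    intro n
    induction n with
    | zero => rw [Qf_zero]; omega
    | succ n ihn =>
      rw [Qf_rec]
      have := ih (n+1)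
      omega

lemma Qf_le (k : ℕ) : ∀ n, Qf (k+1) n ≤ ((n+k).choose n : ℤ) := by
  induction k with
  | zero =>
    intro n
    have := (Qf_one_bounds n).2
    simpa [Nat.choose_self] using this
  | succ k ih =>
    intro n
    induction n with
    | zero => rw [Qf_zero]; simp
    | succ n ihn =>
      rw [Qf_rec]
      have h1 := ih (n+1)
      have hp : ((n+k+1)+1).choose (n+1) = (n+k+1).choose n + (n+k+1).choose (n+1) :=
        Nat.choose_succ_succ _ _
      rw [show (n+1)+(k+1) = (n+k+1)+1 by ring, hp]
      rw [show (n+1)+k = n+k+1 by ring] at h1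
      rw [show n+(k+1) = n+k+1 by ring] at ihn
      push_cast
      push_cast at h1 ihn
      linarith

/-- Partial sums of binomial rows: Pf k n = ∑_{i ≤ n} C(n+k, i). -/
def Pf (k n : ℕ) : ℕ := ∑ i ∈ range (n+1), (n+k).choose i

lemma Pf_zero_right (k : ℕ) : Pf k 0 = 1 := by simp [Pf]

lemma Pf_zero_left (n : ℕ) : Pf 0 n = 2^n := by
  simpa [Pf] using Nat.sum_range_choose n

lemma Pf_pascal (k n : ℕ) : Pf (k+1) (n+1) = Pf k (n+1) + Pf (k+1) n := by
  have key : ∀ M N : ℕ, ∑ i ∈ range (N+2), (M+1).choose i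
      = (∑ i ∈ range (N+2), M.choose i) + ∑ i ∈ range (N+1), M.choose i := by
    intro M N
    rw [Finset.sum_range_succ' (fun i => (M+1).choose i) (N+1)]
    rw [Finset.sum_range_succ' (fun i => M.choose i) (N+1)]
    simp only [Nat.choose_succ_succ, Nat.choose_zero_right]
    rw [Finset.sum_add_distrib]
    ring
  show ∑ i ∈ range (n+2), ((n+1)+(k+1)).choose i = _
  rw [show (n+1)+(k+1) = (n+1+k)+1 by ring]
  rw [key (n+1+k) n]
  unfold Pf
  rw [show n+1+k = (n+1)+k from rfl, show n + (k+1) = n+1+k by ring]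

lemma HPQ (k : ℕ) : ∀ n, 3 * Hf k n = 2 * (Pf k n : ℤ) + Qf k n := by
  induction k with
  | zero =>
    intro n
    induction n using Nat.twoStepInduction with
    | zero => rw [Hf_zero, Pf_zero_right, Qf_zero]; norm_num
    | one =>
      rw [Hf_one, Qf_rec0, Qf_zero]
      rw [show Pf 0 1 = 2 by simp [Pf_zero_left]]
      norm_num
    | more n ih1 ih2 =>
      rw [Hf_rec0]
      have hq1 : Qf 0 (n+1) = - Qf 0 n := Qf_rec0 n
      have hq2 : Qf 0 (n+2) = - Qf 0 (n+1) := Qf_rec0 (n+1)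
      rw [Pf_zero_left] at *
      push_cast at *
      ring_nf at *
      linarith
  | succ k ihk =>
    intro n
    induction n with
    | zero => rw [Hf_zero, Pf_zero_right, Qf_zero]; norm_num
    | succ n ihn =>
      rw [Hf_rec, Qf_rec, Pf_pascal]
      have h1 := ihk (n+1)
      push_cast
      push_cast at h1 ihn
      linarith

lemma Qf_one_right (k : ℕ) : Qf (k+1) 1 = k := by
  have h := Qf_add (k+1) 0
  rw [Qf_zero] at h
  simp only [Nat.zero_add, Nat.choose_one_right] at h
  push_cast at h
  linarith

lemma altsum (k : ℕ) : ∀ M, (-1:ℤ)^M * ∑ n ∈ range (M+1), (-1:ℤ)^n * ((n + k).choose n : ℤ)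
    = Qf (k+1) M := by
  intro M
  induction M with
  | zero => simp [Qf_zero]
  | succ M ih =>
    rw [Finset.sum_range_succ, mul_add]
    have e1 : (-1:ℤ)^(M+1) * ((-1:ℤ)^(M+1) * ((M+1+k).choose (M+1) : ℤ))
        = ((M+1+k).choose (M+1) : ℤ) := by
      rw [← mul_assoc, ← pow_add]
      have h2 : (-1:ℤ)^(M+1+(M+1)) = 1 := by
        rw [show M+1+(M+1) = 2*(M+1) by ring, pow_mul]; norm_num
      rw [h2, one_mul]
    have e2 : (-1:ℤ)^(M+1) * ∑ n ∈ range (M+1), (-1:ℤ)^n * ((n + k).choose n : ℤ)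
        = - Qf (k+1) M := by
      rw [← ih, pow_succ]; ring
    rw [e1, e2]
    have hq := Qf_add (k+1) M
    rw [show M+(k+1) = M+1+k by ring] at hq
    linarith

lemma tKnot_eq (c g : ℕ) (hg : 1 ≤ g) (hc : 2*g+1 ≤ c) :
    tKnot c g = Qf (2*g) (c - (2*g+1)) := by
  unfold tKnot
  rw [if_neg (by omega)]
  set M := c - (2*g+1) with hMdef
  have hM : c - 2*g = M + 1 := by omega
  have hsum : ∑ n ∈ Finset.range (c - 2*g), (-1:ℤ)^n * ((n + 2*g - 1).choose n : ℤ)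
      = ∑ n ∈ Finset.range (M+1), (-1:ℤ)^n * ((n + (2*g-1)).choose n : ℤ) := by
    rw [hM]
    apply Finset.sum_congr rfl
    intro n _
    congr 3
    omega
  rw [hsum]
  have hpow : (-1:ℤ)^(c-1) = (-1:ℤ)^M := by
    have h2 : c - 1 = M + 2*g := by omega
    have h3 : (-1:ℤ)^(2*g) = 1 := by rw [pow_mul]; norm_num
    rw [h2, pow_add, h3, mul_one]
  rw [hpow]
  have := altsum (2*g-1) M
  rw [show 2*g-1+1 = 2*g by omega] at this
  exact this

lemma tpKnot_eq (c g : ℕ) (hg : 1 ≤ g) (hc : g+1 ≤ (c+1)/2) :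
    tpKnot c g = Qf g ((c+1)/2 - (g+1)) := by
  unfold tpKnot
  rw [if_neg (by omega)]
  set cp := (c+1)/2 with hcp
  set M := cp - (g+1) with hMdef
  have hM : cp - g = M + 1 := by omega
  have hexp : cp - g - 1 = M := by omega
  have hsum : ∑ n ∈ Finset.range (cp - g), (-1:ℤ)^n * ((n + g - 1).choose n : ℤ)
      = ∑ n ∈ Finset.range (M+1), (-1:ℤ)^n * ((n + (g-1)).choose n : ℤ) := by
    rw [hM]
    apply Finset.sum_congr rfl
    intro n _
    congr 3
    omega
  rw [hsum, hexp]
  have := altsum (g-1) M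
  rw [show g-1+1 = g by omega] at this
  exact this

lemma sumT (j : ℕ) : ∀ n, ∑ g ∈ Icc 1 (j+1), Qf (2*g) (2*(j+1-g) + n + 2)
    = Hf 0 (2*j+n+2) - Hf (2*(j+1)) n := by
  induction j with
  | zero =>
    intro n
    rw [Finset.Icc_self, Finset.sum_singleton]
    rw [show 2*(1-1)+n+2 = n+2 by omega]
    exact Qf_tele2 0 n
  | succ j ih =>
    intro n
    rw [Finset.sum_Icc_succ_top (by omega : 1 ≤ j+1+1)]
    have h1 : ∑ g ∈ Icc 1 (j+1), Qf (2*g) (2*(j+1+1-g) + n + 2)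
        = ∑ g ∈ Icc 1 (j+1), Qf (2*g) (2*(j+1-g) + (n+2) + 2) := by
      apply Finset.sum_congr rfl
      intro g hg
      simp only [Finset.mem_Icc] at hg
      congr 1
      omega
    rw [h1, ih (n+2)]
    have h2 : Qf (2*(j+1+1)) (2*(j+1+1-(j+1+1)) + n + 2)
        = Hf (2*(j+1)) (n+2) - Hf (2*(j+1+1)) n := by
      rw [show 2*(j+1+1-(j+1+1)) + n + 2 = n+2 by omega,
          show 2*(j+1+1) = (2*j+2)+2 by ring, show 2*(j+1) = 2*j+2 by ring]
      exact Qf_tele2 (2*j+2) n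
    rw [h2, show 2*(j+1)+n+2 = 2*j+(n+2)+2 by ring]
    ring

lemma sumP (j : ℕ) : ∀ n, ∑ g ∈ Icc 1 (j+1), Qf g ((j+1-g) + n + 1)
    = Hf 0 (j+n+1) - Hf (j+1) n := by
  induction j with
  | zero =>
    intro n
    rw [Finset.Icc_self, Finset.sum_singleton]
    rw [show (1-1)+n+1 = n+1 by omega]
    exact Qf_tele1 0 n
  | succ j ih =>
    intro n
    rw [Finset.sum_Icc_succ_top (by omega : 1 ≤ j+1+1)]
    have h1 : ∑ g ∈ Icc 1 (j+1), Qf g ((j+1+1-g) + n + 1)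
        = ∑ g ∈ Icc 1 (j+1), Qf g ((j+1-g) + (n+1) + 1) := by
      apply Finset.sum_congr rfl
      intro g hg
      simp only [Finset.mem_Icc] at hg
      congr 1
      omega
    rw [h1, ih (n+1)]
    have h2 : Qf (j+1+1) ((j+1+1-(j+1+1)) + n + 1) = Hf (j+1) (n+1) - Hf (j+1+1) n := by
      rw [show (j+1+1-(j+1+1)) + n + 1 = n+1 by omega]
      exact Qf_tele1 (j+1) n
    rw [h2, show (j+1)+n+1 = j+(n+1)+1 by ring]
    ring

lemma sumT_part (c j : ℕ) (hj : 1 ≤ j) (hc : 2*j+3 ≤ c) :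
    ∑ g ∈ Icc 1 j, tKnot c g = Hf 0 (c-3) - Hf (2*j) (c-(2*j+3)) := by
  obtain ⟨j', rfl⟩ : ∃ j', j = j'+1 := ⟨j-1, by omega⟩
  set n := c - (2*(j'+1)+3) with hn
  have hcongr : ∑ g ∈ Icc 1 (j'+1), tKnot c g
      = ∑ g ∈ Icc 1 (j'+1), Qf (2*g) (2*(j'+1-g) + n + 2) := by
    apply Finset.sum_congr rfl
    intro g hg
    simp only [Finset.mem_Icc] at hg
    rw [tKnot_eq c g hg.1 (by omega)]
    congr 1
    omega
  rw [hcongr, sumT j' n, show 2*j'+n+2 = c-3 by omega]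

lemma sumP_part (c j : ℕ) (hj : 1 ≤ j) (hc : j+2 ≤ (c+1)/2) :
    ∑ g ∈ Icc 1 j, tpKnot c g = Hf 0 ((c+1)/2-2) - Hf j ((c+1)/2-(j+2)) := by
  obtain ⟨j', rfl⟩ : ∃ j', j = j'+1 := ⟨j-1, by omega⟩
  set n := (c+1)/2 - ((j'+1)+2) with hn
  have hcongr : ∑ g ∈ Icc 1 (j'+1), tpKnot c g
      = ∑ g ∈ Icc 1 (j'+1), Qf g ((j'+1-g) + n + 1) := by
    apply Finset.sum_congr rfl
    intro g hg
    simp only [Finset.mem_Icc] at hg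
    rw [tpKnot_eq c g hg.1 (by omega)]
    congr 1
    omega
  rw [hcongr, sumP j' n, show j'+n+1 = (c+1)/2-2 by omega]

lemma sumT_full (c : ℕ) (hc : 5 ≤ c) :
    ∑ g ∈ Icc 1 ((c-1)/2), tKnot c g = Hf 0 (c-3) := by
  obtain ⟨s, hs⟩ : ∃ s, (c-1)/2 = s+2 := ⟨(c-1)/2-2, by omega⟩
  rw [hs, show s+2 = (s+1)+1 from rfl, Finset.sum_Icc_succ_top (by omega)]
  rw [sumT_part c (s+1) (by omega) (by omega)]
  rw [tKnot_eq c (s+1+1) (by omega) (by omega)]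
  have key : Qf (2*(s+1+1)) (c-(2*(s+1+1)+1)) = Hf (2*(s+1)) (c-(2*(s+1)+3)) := by
    have harg : c - (2*(s+1)+3) = c - (2*(s+1+1)+1) := by omega
    rw [harg]
    have h01 : c - (2*(s+1+1)+1) = 0 ∨ c - (2*(s+1+1)+1) = 1 := by omega
    rcases h01 with h | h
    · rw [h, Qf_zero, Hf_zero]
    · rw [h, show 2*(s+1+1) = (2*s+3)+1 by ring, Qf_one_right, Hf_one]
      push_cast; ring
  rw [key]; ring

lemma sumP_full (c : ℕ) (hc : 5 ≤ c) :
    ∑ g ∈ Icc 1 ((c-1)/2), tpKnot c g = Hf 0 ((c+1)/2-2) := by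
  obtain ⟨p, hp⟩ : ∃ p, (c+1)/2 = p+3 := ⟨(c+1)/2-3, by omega⟩
  rw [show (c-1)/2 = (p+1)+1 by omega, Finset.sum_Icc_succ_top (by omega)]
  rw [sumP_part c (p+1) (by omega) (by omega)]
  rw [tpKnot_eq c (p+1+1) (by omega) (by omega)]
  rw [show (c+1)/2 - ((p+1)+2) = 0 by omega, Qf_zero, Hf_zero]
  ring

lemma E1 (u : ℕ) : Pf (u+1) u = 4^u := by
  unfold Pf
  rw [show u+(u+1) = 2*u+1 by ring]
  exact Nat.sum_range_choose_halfway u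

lemma E2 (u : ℕ) : 2 * Pf u u = 4^u + (2*u).choose u := by
  have hfull : ∑ i ∈ range (2*u+1), (2*u).choose i = 4^u := by
    rw [Nat.sum_range_choose (2*u), pow_mul, show (2:ℕ)^2 = 4 by norm_num]
  have hsplit : ∑ i ∈ range (2*u+1), (2*u).choose i
      = (∑ i ∈ range (u+1), (2*u).choose i) + ∑ i ∈ range u, (2*u).choose (u+1+i) := by
    rw [show 2*u+1 = (u+1)+u by ring]
    exact Finset.sum_range_add _ _ _
  have hrefl : ∑ i ∈ range u, (2*u).choose (u+1+i) = ∑ i ∈ range u, (2*u).choose i := by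
    rw [← Finset.sum_range_reflect (fun i => (2*u).choose (u+1+i)) u]
    apply Finset.sum_congr rfl
    intro j hj
    simp only [Finset.mem_range] at hj
    rw [show u+1+(u-1-j) = 2*u - j by omega]
    have := Nat.choose_symm (show j ≤ 2*u by omega)
    rw [show 2*u - j = 2*u-j from rfl]
    omega
  have hstep : ∑ i ∈ range (u+1), (2*u).choose i
      = (∑ i ∈ range u, (2*u).choose i) + (2*u).choose u := Finset.sum_range_succ _ _
  unfold Pf
  rw [show u+u = 2*u by ring]
  omega

lemma Pf_shift (k n : ℕ) : Pf k (n+1) = Pf (k+1) n + (n+k+1).choose (n+1) := by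
  unfold Pf
  rw [show n+1+k = n+k+1 by ring, show n+(k+1) = n+k+1 by ring, Finset.sum_range_succ]

lemma Qf0_even (k : ℕ) : Qf 0 (2*k) = 1 := by
  induction k with
  | zero => exact Qf_zero 0
  | succ k ih =>
    rw [show 2*(k+1) = (2*k+1)+1 by ring, Qf_rec0, Qf_rec0, ih]
    ring

lemma Qf0_odd (k : ℕ) : Qf 0 (2*k+1) = -1 := by
  rw [Qf_rec0, Qf0_even]

lemma ineqL1 (v : ℕ) :
    Hf 0 (4*v+6) + Hf 0 (2*v+3) ≥ 2 * Hf (2*v+4) (2*v+2) + 2 * Hf (v+2) (v+1) := by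
  have h1 := HPQ 0 (4*v+6)
  have h2 := HPQ 0 (2*v+3)
  have h3 := HPQ (2*v+4) (2*v+2)
  have h4 := HPQ (v+2) (v+1)
  rw [Pf_zero_left] at h1 h2
  push_cast at h1 h2
  have hq1 : Qf 0 (4*v+6) = 1 := by
    rw [show 4*v+6 = 2*(2*v+3) by ring]; exact Qf0_even _
  have hq2 : Qf 0 (2*v+3) = -1 := by
    rw [show 2*v+3 = 2*(v+1)+1 by ring]; exact Qf0_odd _
  have hA : 2 * Pf (2*v+4) (2*v+2) + (4*v+6).choose (2*v+3) = 4^(2*v+3) := by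
    have e2 := E2 (2*v+3)
    have sh := Pf_shift (2*v+3) (2*v+2)
    rw [show 2*v+2+(2*v+3)+1 = 4*v+6 by ring, show 2*v+2+1 = 2*v+3 by ring,
        show 2*v+3+1 = 2*v+4 by ring] at sh
    rw [show 2*(2*v+3) = 4*v+6 by ring] at e2
    omega
  have hB : Pf (v+2) (v+1) = 4^(v+1) := E1 (v+1)
  have hq3 : Qf (2*v+4) (2*v+2) ≤ ((4*v+5).choose (2*v+2) : ℤ) := by
    have := Qf_le (2*v+3) (2*v+2)
    rwa [show 2*v+2+(2*v+3) = 4*v+5 by ring] at this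
  have hq4 : Qf (v+2) (v+1) ≤ ((2*v+2).choose (v+1) : ℤ) := by
    have := Qf_le (v+1) (v+1)
    rwa [show v+1+(v+1) = 2*v+2 by ring] at this
  have hc1 : (4*v+6).choose (2*v+3) = (4*v+5).choose (2*v+2) + (4*v+5).choose (2*v+3) := by
    rw [show 4*v+6 = (4*v+5)+1 by ring, show 2*v+3 = (2*v+2)+1 by ring]
    exact Nat.choose_succ_succ _ _
  have hc2 : (2*v+2).choose (v+1) ≤ (4*v+5).choose (2*v+3) := by
    calc (2*v+2).choose (v+1) ≤ (4*v+5).choose (v+1) := Nat.choose_le_choose _ (by omega)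
      _ ≤ (4*v+5).choose ((4*v+5)/2) := Nat.choose_le_middle _ _
      _ = (4*v+5).choose (2*v+3) := by
          rw [show (4*v+5)/2 = 2*v+2 by omega, show 2*v+2 = 4*v+5-(2*v+3) by omega]
          exact Nat.choose_symm (by omega)
  have hp1 : (4:ℤ)^(2*v+3) = 2^(4*v+6) := by
    rw [show (4:ℤ) = 2^2 by norm_num, ← pow_mul, show 2*(2*v+3) = 4*v+6 by ring]
  have hp2 : 2 * (4:ℤ)^(v+1) = 2^(2*v+3) := by
    rw [show (4:ℤ) = 2^2 by norm_num, ← pow_mul, show 2*(v+1) = 2*v+2 by ring,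
        show 2*v+3 = (2*v+2)+1 by ring, pow_succ]
    ring
  have hAz : 2 * (Pf (2*v+4) (2*v+2) : ℤ) + ((4*v+6).choose (2*v+3) : ℤ) = 4^(2*v+3) := by
    exact_mod_cast hA
  have hBz : (Pf (v+2) (v+1) : ℤ) = 4^(v+1) := by exact_mod_cast hB
  have hc1z : ((4*v+6).choose (2*v+3) : ℤ)
      = (4*v+5).choose (2*v+2) + (4*v+5).choose (2*v+3) := by exact_mod_cast hc1
  have hc2z : ((2*v+2).choose (v+1) : ℤ) ≤ ((4*v+5).choose (2*v+3) : ℤ) := by exact_mod_cast hc2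
  linarith

lemma ineqR1 (v : ℕ) :
    2 * Hf (2*v+2) (2*v+4) + 2 * Hf (v+1) (v+2) ≥ Hf 0 (4*v+6) + Hf 0 (2*v+3) := by
  have h1 := HPQ 0 (4*v+6)
  have h2 := HPQ 0 (2*v+3)
  have h3 := HPQ (2*v+2) (2*v+4)
  have h4 := HPQ (v+1) (v+2)
  rw [Pf_zero_left] at h1 h2
  push_cast at h1 h2
  have hq1 : Qf 0 (4*v+6) = 1 := by
    rw [show 4*v+6 = 2*(2*v+3) by ring]; exact Qf0_even _
  have hq2 : Qf 0 (2*v+3) = -1 := by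
    rw [show 2*v+3 = 2*(v+1)+1 by ring]; exact Qf0_odd _
  have hA : 2 * Pf (2*v+2) (2*v+4)
      = 4^(2*v+3) + (4*v+6).choose (2*v+3) + 2 * (4*v+6).choose (2*v+4) := by
    have e2 := E2 (2*v+3)
    have sh := Pf_shift (2*v+2) (2*v+3)
    rw [show 2*v+3+(2*v+2)+1 = 4*v+6 by ring, show 2*v+3+1 = 2*v+4 by ring,
        show 2*v+2+1 = 2*v+3 by ring] at sh
    rw [show 2*(2*v+3) = 4*v+6 by ring] at e2
    omega
  have hB : Pf (v+1) (v+2) = 4^(v+1) + (2*v+3).choose (v+2) := by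
    have e1 : Pf (v+2) (v+1) = 4^(v+1) := E1 (v+1)
    have sh := Pf_shift (v+1) (v+1)
    rw [show v+1+(v+1)+1 = 2*v+3 by ring] at sh
    rw [show v+1+1 = v+2 by ring] at sh
    omega
  have hq3 : (0:ℤ) ≤ Qf (2*v+2) (2*v+4) := by
    have := Qf_nonneg (2*v+1) (2*v+4)
    rwa [show 2*v+1+1 = 2*v+2 by ring] at this
  have hq4 : (0:ℤ) ≤ Qf (v+1) (v+2) := Qf_nonneg v (v+2)
  have hp1 : (4:ℤ)^(2*v+3) = 2^(4*v+6) := by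
    rw [show (4:ℤ) = 2^2 by norm_num, ← pow_mul, show 2*(2*v+3) = 4*v+6 by ring]
  have hp2 : 2 * (4:ℤ)^(v+1) = 2^(2*v+3) := by
    rw [show (4:ℤ) = 2^2 by norm_num, ← pow_mul, show 2*(v+1) = 2*v+2 by ring,
        show 2*v+3 = (2*v+2)+1 by ring, pow_succ]
    ring
  have hAz : 2 * (Pf (2*v+2) (2*v+4) : ℤ)
      = 4^(2*v+3) + ((4*v+6).choose (2*v+3) : ℤ) + 2 * ((4*v+6).choose (2*v+4) : ℤ) := by
    exact_mod_cast hA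
  have hBz : (Pf (v+1) (v+2) : ℤ) = 4^(v+1) + ((2*v+3).choose (v+2) : ℤ) := by exact_mod_cast hB
  have hn1 : (0:ℤ) ≤ ((4*v+6).choose (2*v+3) : ℤ) := by positivity
  have hn2 : (0:ℤ) ≤ ((4*v+6).choose (2*v+4) : ℤ) := by positivity
  have hn3 : (0:ℤ) ≤ ((2*v+3).choose (v+2) : ℤ) := by positivity
  linarith

lemma ineqL3 (v : ℕ) :
    Hf 0 (4*v+4) + Hf 0 (2*v+2) ≥ 2 * Hf (2*v+4) (2*v) + 2 * Hf (v+2) v := by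
  have h1 := HPQ 0 (4*v+4)
  have h2 := HPQ 0 (2*v+2)
  have h3 := HPQ (2*v+4) (2*v)
  have h4 := HPQ (v+2) v
  rw [Pf_zero_left] at h1 h2
  push_cast at h1 h2
  have hq1 : Qf 0 (4*v+4) = 1 := by
    rw [show 4*v+4 = 2*(2*v+2) by ring]; exact Qf0_even _
  have hq2 : Qf 0 (2*v+2) = 1 := by
    rw [show 2*v+2 = 2*(v+1) by ring]; exact Qf0_even _
  have hA : 2 * Pf (2*v+4) (2*v) + (4*v+4).choose (2*v+2) + 2 * (4*v+4).choose (2*v+1)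
      = 4^(2*v+2) := by
    have e2 := E2 (2*v+2)
    rw [show 2*(2*v+2) = 4*v+4 by ring] at e2
    have sh1 := Pf_shift (2*v+2) (2*v+1)
    rw [show 2*v+1+(2*v+2)+1 = 4*v+4 by ring, show 2*v+1+1 = 2*v+2 by ring,
        show 2*v+2+1 = 2*v+3 by ring] at sh1
    have sh2 := Pf_shift (2*v+3) (2*v)
    rw [show 2*v+(2*v+3)+1 = 4*v+4 by ring, show 2*v+1 = 2*v+1 from rfl,
        show 2*v+3+1 = 2*v+4 by ring] at sh2
    omega
  have hB : 2 * Pf (v+2) v + (2*v+2).choose (v+1) = 4^(v+1) := by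
    have e2 := E2 (v+1)
    rw [show 2*(v+1) = 2*v+2 by ring] at e2
    have sh := Pf_shift (v+1) v
    rw [show v+(v+1)+1 = 2*v+2 by ring, show v+1+1 = v+2 by ring] at sh
    omega
  have hq3 : Qf (2*v+4) (2*v) ≤ ((4*v+3).choose (2*v) : ℤ) := by
    have := Qf_le (2*v+3) (2*v)
    rwa [show 2*v+(2*v+3) = 4*v+3 by ring] at this
  have hq4 : Qf (v+2) v ≤ ((2*v+1).choose v : ℤ) := by
    have := Qf_le (v+1) v
    rwa [show v+(v+1) = 2*v+1 by ring] at this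
  have hc1 : (4*v+4).choose (2*v+1) = (4*v+3).choose (2*v) + (4*v+3).choose (2*v+1) := by
    rw [show 4*v+4 = (4*v+3)+1 by ring, show 2*v+1 = (2*v)+1 by ring]
    exact Nat.choose_succ_succ _ _
  have hc2 : (2*v+2).choose (v+1) = (2*v+1).choose v + (2*v+1).choose (v+1) := by
    rw [show 2*v+2 = (2*v+1)+1 by ring, show v+1 = v+1 from rfl]
    exact Nat.choose_succ_succ _ _
  have hp1 : (4:ℤ)^(2*v+2) = 2^(4*v+4) := by
    rw [show (4:ℤ) = 2^2 by norm_num, ← pow_mul, show 2*(2*v+2) = 4*v+4 by ring]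
  have hp2 : (4:ℤ)^(v+1) = 2^(2*v+2) := by
    rw [show (4:ℤ) = 2^2 by norm_num, ← pow_mul, show 2*(v+1) = 2*v+2 by ring]
  have hAz : 2 * (Pf (2*v+4) (2*v) : ℤ) + ((4*v+4).choose (2*v+2) : ℤ)
      + 2 * ((4*v+4).choose (2*v+1) : ℤ) = 4^(2*v+2) := by exact_mod_cast hA
  have hBz : 2 * (Pf (v+2) v : ℤ) + ((2*v+2).choose (v+1) : ℤ) = 4^(v+1) := by exact_mod_cast hB
  have hc1z : ((4*v+4).choose (2*v+1) : ℤ)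
      = (4*v+3).choose (2*v) + (4*v+3).choose (2*v+1) := by exact_mod_cast hc1
  have hc2z : ((2*v+2).choose (v+1) : ℤ)
      = (2*v+1).choose v + (2*v+1).choose (v+1) := by exact_mod_cast hc2
  have hn1 : (0:ℤ) ≤ ((4*v+3).choose (2*v+1) : ℤ) := by positivity
  have hn2 : (0:ℤ) ≤ ((2*v+1).choose (v+1) : ℤ) := by positivity
  have hn3 : (0:ℤ) ≤ ((4*v+4).choose (2*v+2) : ℤ) := by positivity
  linarith

lemma ineqR3 (v : ℕ) :
    2 * Hf (2*v+2) (2*v+2) + 2 * Hf (v+1) (v+1) ≥ Hf 0 (4*v+4) + Hf 0 (2*v+2) := by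
  have h1 := HPQ 0 (4*v+4)
  have h2 := HPQ 0 (2*v+2)
  have h3 := HPQ (2*v+2) (2*v+2)
  have h4 := HPQ (v+1) (v+1)
  rw [Pf_zero_left] at h1 h2
  push_cast at h1 h2
  have hq1 : Qf 0 (4*v+4) = 1 := by
    rw [show 4*v+4 = 2*(2*v+2) by ring]; exact Qf0_even _
  have hq2 : Qf 0 (2*v+2) = 1 := by
    rw [show 2*v+2 = 2*(v+1) by ring]; exact Qf0_even _
  have hA : 2 * Pf (2*v+2) (2*v+2) = 4^(2*v+2) + (4*v+4).choose (2*v+2) := by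
    have e2 := E2 (2*v+2)
    rwa [show 2*(2*v+2) = 4*v+4 by ring] at e2
  have hB : 2 * Pf (v+1) (v+1) = 4^(v+1) + (2*v+2).choose (v+1) := by
    have e2 := E2 (v+1)
    rwa [show 2*(v+1) = 2*v+2 by ring] at e2
  have hq3 : (0:ℤ) ≤ Qf (2*v+2) (2*v+2) := by
    have := Qf_nonneg (2*v+1) (2*v+2)
    rwa [show 2*v+1+1 = 2*v+2 by ring] at this
  have hq4 : (0:ℤ) ≤ Qf (v+1) (v+1) := Qf_nonneg v (v+1)
  have hp1 : (4:ℤ)^(2*v+2) = 2^(4*v+4) := by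
    rw [show (4:ℤ) = 2^2 by norm_num, ← pow_mul, show 2*(2*v+2) = 4*v+4 by ring]
  have hp2 : (4:ℤ)^(v+1) = 2^(2*v+2) := by
    rw [show (4:ℤ) = 2^2 by norm_num, ← pow_mul, show 2*(v+1) = 2*v+2 by ring]
  have hAz : 2 * (Pf (2*v+2) (2*v+2) : ℤ) = 4^(2*v+2) + ((4*v+4).choose (2*v+2) : ℤ) := by
    exact_mod_cast hA
  have hBz : 2 * (Pf (v+1) (v+1) : ℤ) = 4^(v+1) + ((2*v+2).choose (v+1) : ℤ) := by
    exact_mod_cast hB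
  have hn1 : (1:ℤ) ≤ ((4*v+4).choose (2*v+2) : ℤ) := by
    exact_mod_cast Nat.one_le_iff_ne_zero.mpr (Nat.choose_pos (by omega)).ne'
  have hn2 : (1:ℤ) ≤ ((2*v+2).choose (v+1) : ℤ) := by
    exact_mod_cast Nat.one_le_iff_ne_zero.mpr (Nat.choose_pos (by omega)).ne'
  linarith

lemma ineqL0 (v : ℕ) :
    Hf 0 (4*v+5) + Hf 0 (2*v+2) ≥ 2 * Hf (2*v+4) (2*v+1) + 2 * Hf (v+2) v := by
  have h1 := HPQ 0 (4*v+5)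
  have h2 := HPQ 0 (2*v+2)
  have h3 := HPQ (2*v+4) (2*v+1)
  have h4 := HPQ (v+2) v
  rw [Pf_zero_left] at h1 h2
  push_cast at h1 h2
  have hq1 : Qf 0 (4*v+5) = -1 := by
    rw [show 4*v+5 = 2*(2*v+2)+1 by ring]; exact Qf0_odd _
  have hq2 : Qf 0 (2*v+2) = 1 := by
    rw [show 2*v+2 = 2*(v+1) by ring]; exact Qf0_even _
  have hA : Pf (2*v+4) (2*v+1) + (4*v+5).choose (2*v+2) = 4^(2*v+2) := by
    have e1 : Pf (2*v+3) (2*v+2) = 4^(2*v+2) := E1 (2*v+2)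
    have sh := Pf_shift (2*v+3) (2*v+1)
    rw [show 2*v+1+(2*v+3)+1 = 4*v+5 by ring, show 2*v+1+1 = 2*v+2 by ring,
        show 2*v+3+1 = 2*v+4 by ring] at sh
    omega
  have hB : 2 * Pf (v+2) v + (2*v+2).choose (v+1) = 4^(v+1) := by
    have e2 := E2 (v+1)
    rw [show 2*(v+1) = 2*v+2 by ring] at e2
    have sh := Pf_shift (v+1) v
    rw [show v+(v+1)+1 = 2*v+2 by ring, show v+1+1 = v+2 by ring] at sh
    omega
  have hq3 : Qf (2*v+4) (2*v+1) ≤ ((4*v+4).choose (2*v+1) : ℤ) := by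
    have := Qf_le (2*v+3) (2*v+1)
    rwa [show 2*v+1+(2*v+3) = 4*v+4 by ring] at this
  have hq4 : Qf (v+2) v ≤ ((2*v+1).choose v : ℤ) := by
    have := Qf_le (v+1) v
    rwa [show v+(v+1) = 2*v+1 by ring] at this
  have hc1 : (4*v+5).choose (2*v+2) = (4*v+4).choose (2*v+1) + (4*v+4).choose (2*v+2) := by
    rw [show 4*v+5 = (4*v+4)+1 by ring, show 2*v+2 = (2*v+1)+1 by ring]
    exact Nat.choose_succ_succ _ _
  have hc2 : (2*v+2).choose (v+1) = (2*v+1).choose v + (2*v+1).choose (v+1) := by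
    rw [show 2*v+2 = (2*v+1)+1 by ring]
    exact Nat.choose_succ_succ _ _
  have hp1 : 2 * (4:ℤ)^(2*v+2) = 2^(4*v+5) := by
    rw [show (4:ℤ) = 2^2 by norm_num, ← pow_mul, show 2*(2*v+2) = 4*v+4 by ring,
        show 4*v+5 = (4*v+4)+1 by ring, pow_succ]
    ring
  have hp2 : (4:ℤ)^(v+1) = 2^(2*v+2) := by
    rw [show (4:ℤ) = 2^2 by norm_num, ← pow_mul, show 2*(v+1) = 2*v+2 by ring]
  have hAz : (Pf (2*v+4) (2*v+1) : ℤ) + ((4*v+5).choose (2*v+2) : ℤ) = 4^(2*v+2) := by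
    exact_mod_cast hA
  have hBz : 2 * (Pf (v+2) v : ℤ) + ((2*v+2).choose (v+1) : ℤ) = 4^(v+1) := by exact_mod_cast hB
  have hc1z : ((4*v+5).choose (2*v+2) : ℤ)
      = (4*v+4).choose (2*v+1) + (4*v+4).choose (2*v+2) := by exact_mod_cast hc1
  have hc2z : ((2*v+2).choose (v+1) : ℤ)
      = (2*v+1).choose v + (2*v+1).choose (v+1) := by exact_mod_cast hc2
  have hn1 : (0:ℤ) ≤ ((4*v+4).choose (2*v+2) : ℤ) := by positivity
  have hn2 : (0:ℤ) ≤ ((2*v+1).choose (v+1) : ℤ) := by positivity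
  linarith

lemma ineqR0 (v : ℕ) :
    2 * Hf (2*v+2) (2*v+3) + 2 * Hf (v+1) (v+1) ≥ Hf 0 (4*v+5) + Hf 0 (2*v+2) := by
  have h1 := HPQ 0 (4*v+5)
  have h2 := HPQ 0 (2*v+2)
  have h3 := HPQ (2*v+2) (2*v+3)
  have h4 := HPQ (v+1) (v+1)
  rw [Pf_zero_left] at h1 h2
  push_cast at h1 h2
  have hq1 : Qf 0 (4*v+5) = -1 := by
    rw [show 4*v+5 = 2*(2*v+2)+1 by ring]; exact Qf0_odd _
  have hq2 : Qf 0 (2*v+2) = 1 := by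
    rw [show 2*v+2 = 2*(v+1) by ring]; exact Qf0_even _
  have hA : Pf (2*v+2) (2*v+3) = 4^(2*v+2) + (4*v+5).choose (2*v+3) := by
    have e1 : Pf (2*v+3) (2*v+2) = 4^(2*v+2) := E1 (2*v+2)
    have sh := Pf_shift (2*v+2) (2*v+2)
    rw [show 2*v+2+(2*v+2)+1 = 4*v+5 by ring, show 2*v+2+1 = 2*v+3 by ring] at sh
    omega
  have hB : 2 * Pf (v+1) (v+1) = 4^(v+1) + (2*v+2).choose (v+1) := by
    have e2 := E2 (v+1)
    rwa [show 2*(v+1) = 2*v+2 by ring] at e2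
  have hq3 : (0:ℤ) ≤ Qf (2*v+2) (2*v+3) := by
    have := Qf_nonneg (2*v+1) (2*v+3)
    rwa [show 2*v+1+1 = 2*v+2 by ring] at this
  have hq4 : (0:ℤ) ≤ Qf (v+1) (v+1) := Qf_nonneg v (v+1)
  have hp1 : 2 * (4:ℤ)^(2*v+2) = 2^(4*v+5) := by
    rw [show (4:ℤ) = 2^2 by norm_num, ← pow_mul, show 2*(2*v+2) = 4*v+4 by ring,
        show 4*v+5 = (4*v+4)+1 by ring, pow_succ]
    ring
  have hp2 : (4:ℤ)^(v+1) = 2^(2*v+2) := by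
    rw [show (4:ℤ) = 2^2 by norm_num, ← pow_mul, show 2*(v+1) = 2*v+2 by ring]
  have hAz : (Pf (2*v+2) (2*v+3) : ℤ) = 4^(2*v+2) + ((4*v+5).choose (2*v+3) : ℤ) := by
    exact_mod_cast hA
  have hBz : 2 * (Pf (v+1) (v+1) : ℤ) = 4^(v+1) + ((2*v+2).choose (v+1) : ℤ) := by
    exact_mod_cast hB
  have hn1 : (0:ℤ) ≤ ((4*v+5).choose (2*v+3) : ℤ) := by positivity
  have hn2 : (0:ℤ) ≤ ((2*v+2).choose (v+1) : ℤ) := by positivity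
  linarith

lemma ineqL2 (v : ℕ) :
    Hf 0 (4*v+7) + Hf 0 (2*v+3) ≥ 2 * Hf (2*v+6) (2*v+1) + 2 * Hf (v+3) v := by
  have h1 := HPQ 0 (4*v+7)
  have h2 := HPQ 0 (2*v+3)
  have h3 := HPQ (2*v+6) (2*v+1)
  have h4 := HPQ (v+3) v
  rw [Pf_zero_left] at h1 h2
  push_cast at h1 h2
  have hq1 : Qf 0 (4*v+7) = -1 := by
    rw [show 4*v+7 = 2*(2*v+3)+1 by ring]; exact Qf0_odd _
  have hq2 : Qf 0 (2*v+3) = -1 := by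
    rw [show 2*v+3 = 2*(v+1)+1 by ring]; exact Qf0_odd _
  have hA : Pf (2*v+6) (2*v+1) + (4*v+7).choose (2*v+2) + (4*v+7).choose (2*v+3)
      = 4^(2*v+3) := by
    have e1 : Pf (2*v+4) (2*v+3) = 4^(2*v+3) := E1 (2*v+3)
    have sh1 := Pf_shift (2*v+4) (2*v+2)
    rw [show 2*v+2+(2*v+4)+1 = 4*v+7 by ring, show 2*v+2+1 = 2*v+3 by ring,
        show 2*v+4+1 = 2*v+5 by ring] at sh1
    have sh2 := Pf_shift (2*v+5) (2*v+1)
    rw [show 2*v+1+(2*v+5)+1 = 4*v+7 by ring, show 2*v+1+1 = 2*v+2 by ring,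
        show 2*v+5+1 = 2*v+6 by ring] at sh2
    omega
  have hB : Pf (v+3) v + (2*v+3).choose (v+1) = 4^(v+1) := by
    have e1 : Pf (v+2) (v+1) = 4^(v+1) := E1 (v+1)
    have sh := Pf_shift (v+2) v
    rw [show v+(v+2)+1 = 2*v+3 by ring, show v+1 = v+1 from rfl,
        show v+2+1 = v+3 by ring] at sh
    omega
  have hq3 : Qf (2*v+6) (2*v+1) ≤ ((4*v+6).choose (2*v+1) : ℤ) := by
    have := Qf_le (2*v+5) (2*v+1)
    rwa [show 2*v+1+(2*v+5) = 4*v+6 by ring] at this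
  have hq4 : Qf (v+3) v ≤ ((2*v+2).choose v : ℤ) := by
    have := Qf_le (v+2) v
    rwa [show v+(v+2) = 2*v+2 by ring] at this
  have hc1 : (4*v+7).choose (2*v+2) = (4*v+6).choose (2*v+1) + (4*v+6).choose (2*v+2) := by
    rw [show 4*v+7 = (4*v+6)+1 by ring, show 2*v+2 = (2*v+1)+1 by ring]
    exact Nat.choose_succ_succ _ _
  have hc2 : (2*v+3).choose (v+1) = (2*v+2).choose v + (2*v+2).choose (v+1) := by
    rw [show 2*v+3 = (2*v+2)+1 by ring, show v+1 = v+1 from rfl]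
    exact Nat.choose_succ_succ _ _
  have hp1 : 2 * (4:ℤ)^(2*v+3) = 2^(4*v+7) := by
    rw [show (4:ℤ) = 2^2 by norm_num, ← pow_mul, show 2*(2*v+3) = 4*v+6 by ring,
        show 4*v+7 = (4*v+6)+1 by ring, pow_succ]
    ring
  have hp2 : 2 * (4:ℤ)^(v+1) = 2^(2*v+3) := by
    rw [show (4:ℤ) = 2^2 by norm_num, ← pow_mul, show 2*(v+1) = 2*v+2 by ring,
        show 2*v+3 = (2*v+2)+1 by ring, pow_succ]
    ring
  have hAz : (Pf (2*v+6) (2*v+1) : ℤ) + ((4*v+7).choose (2*v+2) : ℤ)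
      + ((4*v+7).choose (2*v+3) : ℤ) = 4^(2*v+3) := by exact_mod_cast hA
  have hBz : (Pf (v+3) v : ℤ) + ((2*v+3).choose (v+1) : ℤ) = 4^(v+1) := by exact_mod_cast hB
  have hc1z : ((4*v+7).choose (2*v+2) : ℤ)
      = (4*v+6).choose (2*v+1) + (4*v+6).choose (2*v+2) := by exact_mod_cast hc1
  have hc2z : ((2*v+3).choose (v+1) : ℤ)
      = (2*v+2).choose v + (2*v+2).choose (v+1) := by exact_mod_cast hc2
  have hn1 : (1:ℤ) ≤ ((4*v+7).choose (2*v+3) : ℤ) := by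
    exact_mod_cast Nat.one_le_iff_ne_zero.mpr (Nat.choose_pos (by omega)).ne'
  have hn2 : (0:ℤ) ≤ ((4*v+6).choose (2*v+2) : ℤ) := by positivity
  have hn3 : (0:ℤ) ≤ ((2*v+2).choose (v+1) : ℤ) := by positivity
  linarith

lemma ineqR2 (v : ℕ) :
    2 * Hf (2*v+4) (2*v+3) + 2 * Hf (v+2) (v+1) ≥ Hf 0 (4*v+7) + Hf 0 (2*v+3) := by
  have h1 := HPQ 0 (4*v+7)
  have h2 := HPQ 0 (2*v+3)
  have h3 := HPQ (2*v+4) (2*v+3)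
  have h4 := HPQ (v+2) (v+1)
  rw [Pf_zero_left] at h1 h2
  push_cast at h1 h2
  have hq1 : Qf 0 (4*v+7) = -1 := by
    rw [show 4*v+7 = 2*(2*v+3)+1 by ring]; exact Qf0_odd _
  have hq2 : Qf 0 (2*v+3) = -1 := by
    rw [show 2*v+3 = 2*(v+1)+1 by ring]; exact Qf0_odd _
  have hA : Pf (2*v+4) (2*v+3) = 4^(2*v+3) := E1 (2*v+3)
  have hB : Pf (v+2) (v+1) = 4^(v+1) := E1 (v+1)
  have hq3 : (0:ℤ) ≤ Qf (2*v+4) (2*v+3) := by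
    have := Qf_nonneg (2*v+3) (2*v+3)
    rwa [show 2*v+3+1 = 2*v+4 by ring] at this
  have hq4 : (0:ℤ) ≤ Qf (v+2) (v+1) := by
    have := Qf_nonneg (v+1) (v+1)
    rwa [show v+1+1 = v+2 by ring] at this
  have hp1 : 2 * (4:ℤ)^(2*v+3) = 2^(4*v+7) := by
    rw [show (4:ℤ) = 2^2 by norm_num, ← pow_mul, show 2*(2*v+3) = 4*v+6 by ring,
        show 4*v+7 = (4*v+6)+1 by ring, pow_succ]
    ring
  have hp2 : 2 * (4:ℤ)^(v+1) = 2^(2*v+3) := by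
    rw [show (4:ℤ) = 2^2 by norm_num, ← pow_mul, show 2*(v+1) = 2*v+2 by ring,
        show 2*v+3 = (2*v+2)+1 by ring, pow_succ]
    ring
  have hAz : (Pf (2*v+4) (2*v+3) : ℤ) = 4^(2*v+3) := by exact_mod_cast hA
  have hBz : (Pf (v+2) (v+1) : ℤ) = 4^(v+1) := by exact_mod_cast hB
  linarith

/-- For every c ≥ 3, with N = ⌊(c−1)/2⌋, m = ⌊(c+2)/4⌋ and
S = Σ_{g=1}^{N} (t(c,g) + t_p(c,g)): both 2·Σ_{g=1}^{m} (t(c,g)+t_p(c,g)) ≥ S and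
2·Σ_{g=m}^{N} (t(c,g)+t_p(c,g)) ≥ S; that is, the median of the genus distribution
of 2-bridge knots with crossing number c is ⌊(c+2)/4⌋. -/
theorem genus_median (c : ℕ) (hc : 3 ≤ c) :
    2 * ∑ g ∈ Finset.Icc 1 ((c + 2) / 4), (tKnot c g + tpKnot c g) ≥
        ∑ g ∈ Finset.Icc 1 ((c - 1) / 2), (tKnot c g + tpKnot c g) ∧
      2 * ∑ g ∈ Finset.Icc ((c + 2) / 4) ((c - 1) / 2), (tKnot c g + tpKnot c g) ≥
        ∑ g ∈ Finset.Icc 1 ((c - 1) / 2), (tKnot c g + tpKnot c g) := by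
  rcases Nat.lt_or_ge c 7 with hsmall | hbig
  · interval_cases c
    · constructor <;> decide
    · constructor <;> decide
    · constructor <;> decide
    · constructor <;> decide
  · have hcase : (∃ v, c = 4*v+7) ∨ (∃ v, c = 4*v+8) ∨ (∃ v, c = 4*v+9) ∨ (∃ v, c = 4*v+10) := by
      obtain ⟨q, r, hr, hqr⟩ : ∃ q r, r < 4 ∧ c = 4*q + 7 + r :=
        ⟨(c-7)/4, (c-7)%4, Nat.mod_lt _ (by norm_num), by omega⟩
      interval_cases r
      · exact Or.inl ⟨q, by omega⟩
      · exact Or.inr (Or.inl ⟨q, by omega⟩)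
      · exact Or.inr (Or.inr (Or.inl ⟨q, by omega⟩))
      · exact Or.inr (Or.inr (Or.inr ⟨q, by omega⟩))
    rcases hcase with hv | hv | hv | hv
    · obtain ⟨v, rfl⟩ := hv
      rw [show (4*v+7+2)/4 = v+2 by omega, show (4*v+7-1)/2 = 2*v+3 by omega]
      have hSN : ∑ g ∈ Icc 1 (2*v+3), (tKnot (4*v+7) g + tpKnot (4*v+7) g)
          = Hf 0 (4*v+4) + Hf 0 (2*v+2) := by
        rw [Finset.sum_add_distrib]
        have t1 := sumT_full (4*v+7) (by omega)
        have t2 := sumP_full (4*v+7) (by omega)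
        rw [show (4*v+7-1)/2 = 2*v+3 by omega, show 4*v+7-3 = 4*v+4 by omega] at t1
        rw [show (4*v+7-1)/2 = 2*v+3 by omega, show (4*v+7+1)/2-2 = 2*v+2 by omega] at t2
        rw [t1, t2]
      have hSm : ∑ g ∈ Icc 1 (v+2), (tKnot (4*v+7) g + tpKnot (4*v+7) g)
          = (Hf 0 (4*v+4) - Hf (2*v+4) (2*v)) + (Hf 0 (2*v+2) - Hf (v+2) (v)) := by
        rw [Finset.sum_add_distrib]
        have t1 := sumT_part (4*v+7) (v+2) (by omega) (by omega)
        have t2 := sumP_part (4*v+7) (v+2) (by omega) (by omega)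
        rw [show 4*v+7-3 = 4*v+4 by omega, show 4*v+7-(2*(v+2)+3) = 2*v by omega,
            show 2*(v+2) = 2*v+4 by ring] at t1
        rw [show (4*v+7+1)/2-2 = 2*v+2 by omega, show (4*v+7+1)/2-((v+2)+2) = v by omega] at t2
        rw [t1, t2]
      have hSm1 : ∑ g ∈ Icc 1 (v+1), (tKnot (4*v+7) g + tpKnot (4*v+7) g)
          = (Hf 0 (4*v+4) - Hf (2*v+2) (2*v+2)) + (Hf 0 (2*v+2) - Hf (v+1) (v+1)) := by
        rw [Finset.sum_add_distrib]
        have t1 := sumT_part (4*v+7) (v+1) (by omega) (by omega)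
        have t2 := sumP_part (4*v+7) (v+1) (by omega) (by omega)
        rw [show 4*v+7-3 = 4*v+4 by omega, show 4*v+7-(2*(v+1)+3) = 2*v+2 by omega,
            show 2*(v+1) = 2*v+2 by ring] at t1
        rw [show (4*v+7+1)/2-2 = 2*v+2 by omega, show (4*v+7+1)/2-((v+1)+2) = v+1 by omega] at t2
        rw [t1, t2]
      have hsplit : (∑ g ∈ Icc 1 (v+1), (tKnot (4*v+7) g + tpKnot (4*v+7) g))
          + (∑ g ∈ Icc (v+2) (2*v+3), (tKnot (4*v+7) g + tpKnot (4*v+7) g))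
          = ∑ g ∈ Icc 1 (2*v+3), (tKnot (4*v+7) g + tpKnot (4*v+7) g) := by
        have e1 : Finset.Icc 1 (v+1) = Finset.Ioc 0 (v+1) := by
          ext x; simp only [Finset.mem_Icc, Finset.mem_Ioc]; omega
        have e2 : Finset.Icc (v+2) (2*v+3) = Finset.Ioc (v+1) (2*v+3) := by
          ext x; simp only [Finset.mem_Icc, Finset.mem_Ioc]; omega
        have e3 : Finset.Icc 1 (2*v+3) = Finset.Ioc 0 (2*v+3) := by
          ext x; simp only [Finset.mem_Icc, Finset.mem_Ioc]; omega
        rw [e1, e2, e3]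
        exact Finset.sum_Ioc_consecutive _ (by omega) (by omega)
      constructor
      · rw [hSm, hSN]
        have := ineqL3 v
        linarith
      · have h1 := ineqR3 v
        linarith [hsplit, hSm1, hSN]
    · obtain ⟨v, rfl⟩ := hv
      rw [show (4*v+8+2)/4 = v+2 by omega, show (4*v+8-1)/2 = 2*v+3 by omega]
      have hSN : ∑ g ∈ Icc 1 (2*v+3), (tKnot (4*v+8) g + tpKnot (4*v+8) g)
          = Hf 0 (4*v+5) + Hf 0 (2*v+2) := by
        rw [Finset.sum_add_distrib]
        have t1 := sumT_full (4*v+8) (by omega)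
        have t2 := sumP_full (4*v+8) (by omega)
        rw [show (4*v+8-1)/2 = 2*v+3 by omega, show 4*v+8-3 = 4*v+5 by omega] at t1
        rw [show (4*v+8-1)/2 = 2*v+3 by omega, show (4*v+8+1)/2-2 = 2*v+2 by omega] at t2
        rw [t1, t2]
      have hSm : ∑ g ∈ Icc 1 (v+2), (tKnot (4*v+8) g + tpKnot (4*v+8) g)
          = (Hf 0 (4*v+5) - Hf (2*v+4) (2*v+1)) + (Hf 0 (2*v+2) - Hf (v+2) (v)) := by
        rw [Finset.sum_add_distrib]
        have t1 := sumT_part (4*v+8) (v+2) (by omega) (by omega)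
        have t2 := sumP_part (4*v+8) (v+2) (by omega) (by omega)
        rw [show 4*v+8-3 = 4*v+5 by omega, show 4*v+8-(2*(v+2)+3) = 2*v+1 by omega,
            show 2*(v+2) = 2*v+4 by ring] at t1
        rw [show (4*v+8+1)/2-2 = 2*v+2 by omega, show (4*v+8+1)/2-((v+2)+2) = v by omega] at t2
        rw [t1, t2]
      have hSm1 : ∑ g ∈ Icc 1 (v+1), (tKnot (4*v+8) g + tpKnot (4*v+8) g)
          = (Hf 0 (4*v+5) - Hf (2*v+2) (2*v+3)) + (Hf 0 (2*v+2) - Hf (v+1) (v+1)) := by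
        rw [Finset.sum_add_distrib]
        have t1 := sumT_part (4*v+8) (v+1) (by omega) (by omega)
        have t2 := sumP_part (4*v+8) (v+1) (by omega) (by omega)
        rw [show 4*v+8-3 = 4*v+5 by omega, show 4*v+8-(2*(v+1)+3) = 2*v+3 by omega,
            show 2*(v+1) = 2*v+2 by ring] at t1
        rw [show (4*v+8+1)/2-2 = 2*v+2 by omega, show (4*v+8+1)/2-((v+1)+2) = v+1 by omega] at t2
        rw [t1, t2]
      have hsplit : (∑ g ∈ Icc 1 (v+1), (tKnot (4*v+8) g + tpKnot (4*v+8) g))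
          + (∑ g ∈ Icc (v+2) (2*v+3), (tKnot (4*v+8) g + tpKnot (4*v+8) g))
          = ∑ g ∈ Icc 1 (2*v+3), (tKnot (4*v+8) g + tpKnot (4*v+8) g) := by
        have e1 : Finset.Icc 1 (v+1) = Finset.Ioc 0 (v+1) := by
          ext x; simp only [Finset.mem_Icc, Finset.mem_Ioc]; omega
        have e2 : Finset.Icc (v+2) (2*v+3) = Finset.Ioc (v+1) (2*v+3) := by
          ext x; simp only [Finset.mem_Icc, Finset.mem_Ioc]; omega
        have e3 : Finset.Icc 1 (2*v+3) = Finset.Ioc 0 (2*v+3) := by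
          ext x; simp only [Finset.mem_Icc, Finset.mem_Ioc]; omega
        rw [e1, e2, e3]
        exact Finset.sum_Ioc_consecutive _ (by omega) (by omega)
      constructor
      · rw [hSm, hSN]
        have := ineqL0 v
        linarith
      · have h1 := ineqR0 v
        linarith [hsplit, hSm1, hSN]
    · obtain ⟨v, rfl⟩ := hv
      rw [show (4*v+9+2)/4 = v+2 by omega, show (4*v+9-1)/2 = 2*v+4 by omega]
      have hSN : ∑ g ∈ Icc 1 (2*v+4), (tKnot (4*v+9) g + tpKnot (4*v+9) g)
          = Hf 0 (4*v+6) + Hf 0 (2*v+3) := by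
        rw [Finset.sum_add_distrib]
        have t1 := sumT_full (4*v+9) (by omega)
        have t2 := sumP_full (4*v+9) (by omega)
        rw [show (4*v+9-1)/2 = 2*v+4 by omega, show 4*v+9-3 = 4*v+6 by omega] at t1
        rw [show (4*v+9-1)/2 = 2*v+4 by omega, show (4*v+9+1)/2-2 = 2*v+3 by omega] at t2
        rw [t1, t2]
      have hSm : ∑ g ∈ Icc 1 (v+2), (tKnot (4*v+9) g + tpKnot (4*v+9) g)
          = (Hf 0 (4*v+6) - Hf (2*v+4) (2*v+2)) + (Hf 0 (2*v+3) - Hf (v+2) (v+1)) := by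
        rw [Finset.sum_add_distrib]
        have t1 := sumT_part (4*v+9) (v+2) (by omega) (by omega)
        have t2 := sumP_part (4*v+9) (v+2) (by omega) (by omega)
        rw [show 4*v+9-3 = 4*v+6 by omega, show 4*v+9-(2*(v+2)+3) = 2*v+2 by omega,
            show 2*(v+2) = 2*v+4 by ring] at t1
        rw [show (4*v+9+1)/2-2 = 2*v+3 by omega, show (4*v+9+1)/2-((v+2)+2) = v+1 by omega] at t2
        rw [t1, t2]
      have hSm1 : ∑ g ∈ Icc 1 (v+1), (tKnot (4*v+9) g + tpKnot (4*v+9) g)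
          = (Hf 0 (4*v+6) - Hf (2*v+2) (2*v+4)) + (Hf 0 (2*v+3) - Hf (v+1) (v+2)) := by
        rw [Finset.sum_add_distrib]
        have t1 := sumT_part (4*v+9) (v+1) (by omega) (by omega)
        have t2 := sumP_part (4*v+9) (v+1) (by omega) (by omega)
        rw [show 4*v+9-3 = 4*v+6 by omega, show 4*v+9-(2*(v+1)+3) = 2*v+4 by omega,
            show 2*(v+1) = 2*v+2 by ring] at t1
        rw [show (4*v+9+1)/2-2 = 2*v+3 by omega, show (4*v+9+1)/2-((v+1)+2) = v+2 by omega] at t2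
        rw [t1, t2]
      have hsplit : (∑ g ∈ Icc 1 (v+1), (tKnot (4*v+9) g + tpKnot (4*v+9) g))
          + (∑ g ∈ Icc (v+2) (2*v+4), (tKnot (4*v+9) g + tpKnot (4*v+9) g))
          = ∑ g ∈ Icc 1 (2*v+4), (tKnot (4*v+9) g + tpKnot (4*v+9) g) := by
        have e1 : Finset.Icc 1 (v+1) = Finset.Ioc 0 (v+1) := by
          ext x; simp only [Finset.mem_Icc, Finset.mem_Ioc]; omega
        have e2 : Finset.Icc (v+2) (2*v+4) = Finset.Ioc (v+1) (2*v+4) := by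
          ext x; simp only [Finset.mem_Icc, Finset.mem_Ioc]; omega
        have e3 : Finset.Icc 1 (2*v+4) = Finset.Ioc 0 (2*v+4) := by
          ext x; simp only [Finset.mem_Icc, Finset.mem_Ioc]; omega
        rw [e1, e2, e3]
        exact Finset.sum_Ioc_consecutive _ (by omega) (by omega)
      constructor
      · rw [hSm, hSN]
        have := ineqL1 v
        linarith
      · have h1 := ineqR1 v
        linarith [hsplit, hSm1, hSN]
    · obtain ⟨v, rfl⟩ := hv
      rw [show (4*v+10+2)/4 = v+3 by omega, show (4*v+10-1)/2 = 2*v+4 by omega]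
      have hSN : ∑ g ∈ Icc 1 (2*v+4), (tKnot (4*v+10) g + tpKnot (4*v+10) g)
          = Hf 0 (4*v+7) + Hf 0 (2*v+3) := by
        rw [Finset.sum_add_distrib]
        have t1 := sumT_full (4*v+10) (by omega)
        have t2 := sumP_full (4*v+10) (by omega)
        rw [show (4*v+10-1)/2 = 2*v+4 by omega, show 4*v+10-3 = 4*v+7 by omega] at t1
        rw [show (4*v+10-1)/2 = 2*v+4 by omega, show (4*v+10+1)/2-2 = 2*v+3 by omega] at t2
        rw [t1, t2]
      have hSm : ∑ g ∈ Icc 1 (v+3), (tKnot (4*v+10) g + tpKnot (4*v+10) g)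
          = (Hf 0 (4*v+7) - Hf (2*v+6) (2*v+1)) + (Hf 0 (2*v+3) - Hf (v+3) (v)) := by
        rw [Finset.sum_add_distrib]
        have t1 := sumT_part (4*v+10) (v+3) (by omega) (by omega)
        have t2 := sumP_part (4*v+10) (v+3) (by omega) (by omega)
        rw [show 4*v+10-3 = 4*v+7 by omega, show 4*v+10-(2*(v+3)+3) = 2*v+1 by omega,
            show 2*(v+3) = 2*v+6 by ring] at t1
        rw [show (4*v+10+1)/2-2 = 2*v+3 by omega, show (4*v+10+1)/2-((v+3)+2) = v by omega] at t2
        rw [t1, t2]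
      have hSm1 : ∑ g ∈ Icc 1 (v+2), (tKnot (4*v+10) g + tpKnot (4*v+10) g)
          = (Hf 0 (4*v+7) - Hf (2*v+4) (2*v+3)) + (Hf 0 (2*v+3) - Hf (v+2) (v+1)) := by
        rw [Finset.sum_add_distrib]
        have t1 := sumT_part (4*v+10) (v+2) (by omega) (by omega)
        have t2 := sumP_part (4*v+10) (v+2) (by omega) (by omega)
        rw [show 4*v+10-3 = 4*v+7 by omega, show 4*v+10-(2*(v+2)+3) = 2*v+3 by omega,
            show 2*(v+2) = 2*v+4 by ring] at t1
        rw [show (4*v+10+1)/2-2 = 2*v+3 by omega, show (4*v+10+1)/2-((v+2)+2) = v+1 by omega] at t2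
        rw [t1, t2]
      have hsplit : (∑ g ∈ Icc 1 (v+2), (tKnot (4*v+10) g + tpKnot (4*v+10) g))
          + (∑ g ∈ Icc (v+3) (2*v+4), (tKnot (4*v+10) g + tpKnot (4*v+10) g))
          = ∑ g ∈ Icc 1 (2*v+4), (tKnot (4*v+10) g + tpKnot (4*v+10) g) := by
        have e1 : Finset.Icc 1 (v+2) = Finset.Ioc 0 (v+2) := by
          ext x; simp only [Finset.mem_Icc, Finset.mem_Ioc]; omega
        have e2 : Finset.Icc (v+3) (2*v+4) = Finset.Ioc (v+2) (2*v+4) := by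
          ext x; simp only [Finset.mem_Icc, Finset.mem_Ioc]; omega
        have e3 : Finset.Icc 1 (2*v+4) = Finset.Ioc 0 (2*v+4) := by
          ext x; simp only [Finset.mem_Icc, Finset.mem_Ioc]; omega
        rw [e1, e2, e3]
        exact Finset.sum_Ioc_consecutive _ (by omega) (by omega)
      constructor
      · rw [hSm, hSN]
        have := ineqL2 v
        linarith
      · have h1 := ineqR2 v
        linarith [hsplit, hSm1, hSN]
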